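/- Let Δ be a numerical semigroup with Δ ≠ ℕ, d ≥ 2, and a ∈ Δ \ {0} with a+1 ∈ Δ. Then the genus of Δ_d(a) equals d·g(Δ) + (d−1)·a, where g(S) = |ℕ \ S|. -/

import Mathlib

/-- A submonoid of (ℕ,+), as a set. -/
def IsSubmonoidN (M : Set ℕ) : Prop :=
  0 ∈ M ∧ ∀ a b : ℕ, a ∈ M → b ∈ M → a + b ∈ M

/-- A numerical semigroup: a submonoid of ℕ with finite complement. -/
def IsNumericalSemigroup (S : Set ℕ) : Prop :=
  IsSubmonoidN S ∧ (Sᶜ : Set ℕ).Finite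

/-- The quotient A/d = {x : d·x ∈ A}. -/
def quotSet (A : Set ℕ) (d : ℕ) : Set ℕ := {x | d * x ∈ A}

/-- The dilation d·A = {d·s : s ∈ A}. -/
def dilate (d : ℕ) (A : Set ℕ) : Set ℕ := (fun s => d * s) '' A

/-- Sumset A + B. -/
def setAdd (A B : Set ℕ) : Set ℕ := {n | ∃ a ∈ A, ∃ b ∈ B, n = a + b}

/-- Minimal system of generators: nonzero elements not a sum of two nonzero elements. -/
def msg (S : Set ℕ) : Set ℕ :=
  {x | x ∈ S ∧ x ≠ 0 ∧ ∀ a b : ℕ, a ∈ S → b ∈ S → a ≠ 0 → b ≠ 0 → x ≠ a + b}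

/-- Frobenius number: largest element of the complement. -/
noncomputable def frob (S : Set ℕ) : ℕ := sSup (Sᶜ : Set ℕ)

/-- Genus: number of gaps. -/
noncomputable def genus (S : Set ℕ) : ℕ := (Sᶜ : Set ℕ).ncard

/-- Multiplicity: least nonzero element. -/
noncomputable def multy (S : Set ℕ) : ℕ := sInf {x | x ∈ S ∧ x ≠ 0}

/-- n(S) = number of elements of S below the Frobenius number. -/
noncomputable def nnum (S : Set ℕ) : ℕ := {s | s ∈ S ∧ s < frob S}.ncard

/-- Embedding dimension. -/
noncomputable def edim (S : Set ℕ) : ℕ := (msg S).ncard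

/-- The semigroup Δ_d(a) = dΔ ∪ ⋃_{i=1}^{d-1} (da+i+dΔ). -/
def Deltada (d a : ℕ) (Δ : Set ℕ) : Set ℕ :=
  dilate d Δ ∪ ⋃ i ∈ Finset.Ico 1 d, (fun s => d * a + i + d * s) '' Δ

/-- Submonoid of ℕ generated by X, as a set. -/
def genBy (X : Set ℕ) : Set ℕ := (AddSubmonoid.closure X : Set ℕ)

/-- Multiples of x. -/
def natMultiples (x : ℕ) : Set ℕ := {n | ∃ k : ℕ, n = k * x}

/-- Apéry set of S with respect to m. -/
def apery (S : Set ℕ) (m : ℕ) : Set ℕ := {s | s ∈ S ∧ ∀ t ∈ S, s ≠ t + m}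

/-- Pseudo-Frobenius numbers, as integers. -/
def PF (S : Set ℕ) : Set ℤ :=
  {z | (∀ n : ℕ, (n : ℤ) = z → n ∉ S) ∧
    ∀ s : ℕ, s ∈ S → s ≠ 0 → ∃ m : ℕ, m ∈ S ∧ (m : ℤ) = z + s}

theorem stmt8 (Δ : Set ℕ) (hΔ : IsNumericalSemigroup Δ) (hne : Δ ≠ Set.univ)
    (d : ℕ) (hd : 2 ≤ d)
    (a : ℕ) (ha : a ∈ Δ) (ha0 : a ≠ 0) (ha1 : a + 1 ∈ Δ) :
    genus (Deltada d a Δ) = d * genus Δ + (d - 1) * a := by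
  classical
  have hd0 : 0 < d := by omega
  have hG : (Δᶜ : Set ℕ).Finite := hΔ.2
  set G : Finset ℕ := hG.toFinset with hGdef
  have hGmem : ∀ n, n ∈ G ↔ n ∉ Δ := by
    intro n; simp [hGdef]
  set F : Finset ℕ :=
    (G.image (fun s => d * s)) ∪
      (Finset.Ico 1 d).biUnion
        (fun i => ((Finset.range a) ∪ G.image (fun s => a + s)).image
          (fun q => d * q + i)) with hFdef
  have hmem : ∀ n : ℕ, n ∈ Deltada d a Δ ↔
      (n % d = 0 ∧ n / d ∈ Δ) ∨ (1 ≤ n % d ∧ a ≤ n / d ∧ n / d - a ∈ Δ) := by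
    intro n
    constructor
    · rintro (⟨s, hs, rfl⟩ | h)
      · exact Or.inl ⟨Nat.mul_mod_right d s, by rw [Nat.mul_div_cancel_left _ hd0]; exact hs⟩
      · simp only [Set.mem_iUnion, Set.mem_image] at h
        obtain ⟨i, hi, s, hs, rfl⟩ := h
        rw [Finset.mem_Ico] at hi
        have h1 : d * a + i + d * s = d * (a + s) + i := by ring
        rw [h1]
        have hmod : (d * (a + s) + i) % d = i := by
          rw [Nat.mul_add_mod]; exact Nat.mod_eq_of_lt hi.2
        have hdiv : (d * (a + s) + i) / d = a + s := by
          rw [Nat.mul_add_div hd0, Nat.div_eq_of_lt hi.2, Nat.add_zero]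
        refine Or.inr ⟨by omega, ?_, ?_⟩
        · rw [hdiv]; omega
        · rw [hdiv]; simpa using hs
    · have hdm := Nat.div_add_mod n d
      rintro (⟨h0, h1⟩ | ⟨h1, h2, h3⟩)
      · refine Or.inl ⟨n / d, h1, ?_⟩
        show d * (n / d) = n
        omega
      · right
        simp only [Set.mem_iUnion, Set.mem_image]
        obtain ⟨s, hsd⟩ : ∃ s, n / d = a + s := ⟨n / d - a, by omega⟩
        refine ⟨n % d, Finset.mem_Ico.mpr ⟨h1, Nat.mod_lt n hd0⟩, s, ?_, ?_⟩
        · have : n / d - a = s := by omega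
          rwa [this] at h3
        · rw [hsd] at hdm
          rw [Nat.mul_add] at hdm
          omega
  have hC : ((Deltada d a Δ)ᶜ : Set ℕ) = ↑F := by
    ext n
    have hdm := Nat.div_add_mod n d
    simp only [Set.mem_compl_iff, hmem n, hFdef, Finset.coe_union, Set.mem_union,
      Finset.coe_image, Finset.coe_biUnion, Set.mem_image, Set.mem_iUnion,
      Finset.mem_coe, Finset.mem_range, Finset.mem_union, Finset.mem_image,
      Finset.mem_Ico, hGmem, Finset.mem_range]
    constructor
    · intro hn
      push_neg at hn
      by_cases h0 : n % d = 0
      · left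
        refine ⟨n / d, fun hdiv => hn.1 h0 hdiv, by omega⟩
      · right
        refine ⟨n % d, ⟨by omega, Nat.mod_lt n hd0⟩, n / d, ?_, by omega⟩
        by_cases hq : n / d < a
        · exact Or.inl hq
        · right
          exact ⟨n / d - a, fun hmem' => hn.2 (by omega) (by omega) hmem', by omega⟩
    · rintro (⟨s, hs, rfl⟩ | ⟨i, ⟨hi1, hid⟩, q, hq, rfl⟩)
      · have hmod : d * s % d = 0 := Nat.mul_mod_right d s
        have hdiv : d * s / d = s := Nat.mul_div_cancel_left _ hd0
        rintro (⟨_, h⟩ | ⟨h, _, _⟩)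
        · rw [hdiv] at h; exact hs h
        · omega
      · have hmod : (d * q + i) % d = i := by
          rw [Nat.mul_add_mod]; exact Nat.mod_eq_of_lt hid
        have hdiv : (d * q + i) / d = q := by
          rw [Nat.mul_add_div hd0, Nat.div_eq_of_lt hid, Nat.add_zero]
        rintro (⟨h0, _⟩ | ⟨_, h2, h3⟩)
        · omega
        · rw [hdiv] at h2 h3
          rcases hq with hq | ⟨s, hs, rfl⟩
          · omega
          · have : a + s - a = s := by omega
            rw [this] at h3
            exact hs h3
  have hinj : Function.Injective (fun s : ℕ => d * s) := fun x y h => by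
    simpa using Nat.eq_of_mul_eq_mul_left hd0 h
  have hinner : ∀ q : ℕ, ((Finset.range a) ∪ G.image (fun s => a + s)).card = a + G.card := by
    intro _
    have hdisj : Disjoint (Finset.range a) (G.image (fun s => a + s)) := by
      rw [Finset.disjoint_left]
      rintro x hx hx2
      simp only [Finset.mem_image] at hx2
      obtain ⟨s, _, rfl⟩ := hx2
      simp only [Finset.mem_range] at hx
      omega
    rw [Finset.card_union_of_disjoint hdisj, Finset.card_range,
      Finset.card_image_of_injective _ (add_right_injective a)]
  have hFcard : F.card = G.card + (d - 1) * (a + G.card) := by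
    rw [hFdef, Finset.card_union_of_disjoint, Finset.card_image_of_injective _ hinj,
      Finset.card_biUnion]
    · have : ∀ i ∈ Finset.Ico 1 d,
          (((Finset.range a) ∪ G.image (fun s => a + s)).image (fun q => d * q + i)).card
            = a + G.card := by
        intro i _
        rw [Finset.card_image_of_injective, hinner 0]
        intro x y h
        simp only at h
        have : d * x = d * y := by omega
        exact Nat.eq_of_mul_eq_mul_left hd0 this
      rw [Finset.sum_congr rfl this, Finset.sum_const, Nat.card_Ico, smul_eq_mul]
    · intro i hi j hj hij
      rw [Finset.mem_coe, Finset.mem_Ico] at hi hj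
      rw [Function.onFun_apply, Finset.disjoint_left]
      rintro x hx hx2
      simp only [Finset.mem_image] at hx hx2
      obtain ⟨q, _, rfl⟩ := hx
      obtain ⟨q', _, heq⟩ := hx2
      have h1 : (d * q + i) % d = i := by
        rw [Nat.mul_add_mod]; exact Nat.mod_eq_of_lt hi.2
      have h2 : (d * q' + j) % d = j := by
        rw [Nat.mul_add_mod]; exact Nat.mod_eq_of_lt hj.2
      rw [heq] at h2
      omega
    · rw [Finset.disjoint_left]
      rintro x hx hx2
      simp only [Finset.mem_image, Finset.mem_biUnion, Finset.mem_Ico] at hx hx2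
      obtain ⟨s, _, rfl⟩ := hx
      obtain ⟨i, ⟨hi1, hid⟩, q, _, heq⟩ := hx2
      have h1 : (d * q + i) % d = i := by
        rw [Nat.mul_add_mod]; exact Nat.mod_eq_of_lt hid
      have h2 : d * s % d = 0 := Nat.mul_mod_right d s
      rw [← heq] at h2
      omega
  have hg : genus Δ = G.card := by
    rw [genus, hGdef, ← Set.ncard_coe_finset]
    simp
  rw [genus, hC, Set.ncard_coe_finset, hFcard, hg]
  obtain ⟨e, rfl⟩ : ∃ e, d = e + 1 := ⟨d - 1, by omega⟩
  simp only [Nat.add_sub_cancel]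
  ring
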